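/- Let χ ∈ [0,1] and let f_A, f_R : [0,∞) → ℝ be continuous with |f_A(ρ)| + |f_R(ρ)| ≤ C e^{−cρ} for some constants C, c > 0. Define F(d) = ((f_A + f_R)(|d|) d₁, (χ f_A + f_R)(|d|) d₂) for d = (d₁,d₂) ∈ ℝ² and let Δ > 0. Then for every x₁ ∈ [−Δ/2, Δ/2] the second component of ∫_{[−Δ/2,Δ/2]×ℝ} F((x₁,0) − x') dx' vanishes, and the condition '∫_{[−Δ/2,Δ/2]×ℝ} F((x₁,0) − x') dx' = 0 for all x₁ ∈ [−Δ/2,Δ/2]' holds if and only if the first component satisfies ∫_{[x₁, Δ−x₁]×ℝ} F₁(x') dx' = 0 for all x₁ ∈ [0, Δ/2). -/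

import Mathlib

open Real MeasureTheory

/-- The anisotropic force
`F(d) = ((f_A+f_R)(|d|) d₁, (χ f_A + f_R)(|d|) d₂)` for the tensor field
`T = diag(1,χ)`. -/
noncomputable def anisoForce (fA fR : ℝ → ℝ) (χ : ℝ) (d : ℝ × ℝ) : ℝ × ℝ :=
  ((fA (Real.sqrt (d.1 ^ 2 + d.2 ^ 2)) + fR (Real.sqrt (d.1 ^ 2 + d.2 ^ 2))) * d.1,
   (χ * fA (Real.sqrt (d.1 ^ 2 + d.2 ^ 2)) + fR (Real.sqrt (d.1 ^ 2 + d.2 ^ 2))) * d.2)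

open Set
lemma aniso_cont {fA fR : ℝ → ℝ} (hfA : ContinuousOn fA (Set.Ici 0))
    (hfR : ContinuousOn fR (Set.Ici 0)) (χ : ℝ) :
    Continuous (anisoForce fA fR χ) := by
  have hs : Continuous fun d : ℝ × ℝ => Real.sqrt (d.1 ^ 2 + d.2 ^ 2) :=
    Real.continuous_sqrt.comp ((continuous_fst.pow 2).add (continuous_snd.pow 2))
  have hA : Continuous fun d : ℝ × ℝ => fA (Real.sqrt (d.1 ^ 2 + d.2 ^ 2)) :=
    hfA.comp_continuous hs fun d => Real.sqrt_nonneg _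
  have hR : Continuous fun d : ℝ × ℝ => fR (Real.sqrt (d.1 ^ 2 + d.2 ^ 2)) :=
    hfR.comp_continuous hs fun d => Real.sqrt_nonneg _
  exact ((hA.add hR).mul continuous_fst).prodMk
    (((continuous_const.mul hA).add hR).mul continuous_snd)

lemma aniso_flip {fA fR : ℝ → ℝ} {χ : ℝ} (u : ℝ × ℝ) :
    anisoForce fA fR χ (u.1, -u.2)
      = ((anisoForce fA fR χ u).1, -(anisoForce fA fR χ u).2) := by
  simp [anisoForce, neg_sq, mul_neg]

lemma aniso_neg {fA fR : ℝ → ℝ} {χ : ℝ} (u : ℝ × ℝ) :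
    anisoForce fA fR χ (-u) = -anisoForce fA fR χ u := by
  simp [anisoForce, neg_sq, mul_neg, Prod.ext_iff]

lemma exp_abs_integrable {a : ℝ} (ha : 0 < a) :
    Integrable (fun x : ℝ => Real.exp (-a * |x|)) := by
  have h1 : IntegrableOn (fun x : ℝ => Real.exp (-a * |x|)) (Ioi 0) := by
    refine (exp_neg_integrableOn_Ioi 0 ha).congr_fun ?_ measurableSet_Ioi
    intro x hx
    simp [abs_of_pos (mem_Ioi.1 hx)]
  have h1' : IntegrableOn (fun x : ℝ => Real.exp (-a * |x|)) (Ici 0) :=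
    (integrableOn_Ici_iff_integrableOn_Ioi (by simp)).2 h1
  have h2 : IntegrableOn (fun x : ℝ => Real.exp (-a * |x|)) (Iio 0) := by
    have hpre : (Neg.neg : ℝ → ℝ) ⁻¹' (Ioi 0) = Iio 0 := by
      ext x; simp
    have := ((Measure.measurePreserving_neg (volume : Measure ℝ)).integrableOn_comp_preimage
      (MeasurableEquiv.neg ℝ).measurableEmbedding
      (f := fun x : ℝ => Real.exp (-a * |x|)) (s := Ioi 0)).2 h1
    rw [hpre] at this
    refine this.congr_fun ?_ measurableSet_Iio
    intro x _
    simp [Function.comp]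
  have : IntegrableOn (fun x : ℝ => Real.exp (-a * |x|)) (Iio 0 ∪ Ici 0) := h2.union h1'
  rwa [Iio_union_Ici, integrableOn_univ] at this

lemma aniso_integrableOn {fA fR : ℝ → ℝ} {χ C c : ℝ}
    (hχ : χ ∈ Set.Icc (0:ℝ) 1)
    (hfA : ContinuousOn fA (Set.Ici 0)) (hfR : ContinuousOn fR (Set.Ici 0))
    (hC : 0 < C) (hc : 0 < c)
    (hdecay : ∀ ρ ∈ Set.Ici (0:ℝ), |fA ρ| + |fR ρ| ≤ C * Real.exp (-c * ρ))
    (a b : ℝ) :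
    IntegrableOn (anisoForce fA fR χ) (Icc a b ×ˢ (univ : Set ℝ)) volume := by
  obtain ⟨hχ0, hχ1⟩ := hχ
  set K := C * max (max |a| |b|) (2 / c) with hK
  have hKpos : 0 ≤ K := by
    have : (0:ℝ) ≤ 2 / c := by positivity
    have : (0:ℝ) ≤ max (max |a| |b|) (2 / c) := le_trans this (le_max_right _ _)
    positivity
  have hg : IntegrableOn (fun u : ℝ × ℝ => K * Real.exp (-(c/2) * |u.2|))
      (Icc a b ×ˢ (univ : Set ℝ)) volume := by
    rw [IntegrableOn, Measure.volume_eq_prod, ← Measure.prod_restrict, Measure.restrict_univ]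
    have h1 : Integrable (fun _ : ℝ => K) (volume.restrict (Icc a b)) := by
      refine integrableOn_const ?_
      exact measure_Icc_lt_top.ne
    exact h1.mul_prod (exp_abs_integrable (half_pos hc))
  refine hg.mono' ((aniso_cont hfA hfR χ).aestronglyMeasurable.restrict) ?_
  rw [ae_restrict_iff' (measurableSet_Icc.prod MeasurableSet.univ)]
  refine ae_of_all _ fun u hu => ?_
  obtain ⟨hu1, -⟩ := hu
  set r := Real.sqrt (u.1 ^ 2 + u.2 ^ 2) with hr
  have hr0 : 0 ≤ r := Real.sqrt_nonneg _
  have hr2 : |u.2| ≤ r := by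
    rw [hr, ← Real.sqrt_sq_eq_abs]
    exact Real.sqrt_le_sqrt (by nlinarith [sq_nonneg u.1])
  have hd := hdecay r hr0
  have hfA0 : 0 ≤ |fA r| := abs_nonneg _
  have hfR0 : 0 ≤ |fR r| := abs_nonneg _
  have hexp : Real.exp (-c * r) ≤ Real.exp (-(c/2) * |u.2|) := by
    apply Real.exp_le_exp.2; nlinarith [abs_nonneg u.2]
  have hexp2 : Real.exp (-c * r) ≤ Real.exp (-(c/2) * |u.2|) * Real.exp (-(c/2) * |u.2|) := by
    rw [← Real.exp_add]
    apply Real.exp_le_exp.2; nlinarith [abs_nonneg u.2]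
  have hu1' : |u.1| ≤ max |a| |b| := by
    rw [abs_le]
    constructor
    · have := hu1.1; have : -|a| ≤ a := neg_abs_le a
      refine le_trans (neg_le_neg (le_max_left |a| |b|)) ?_; linarith [hu1.1, neg_abs_le a]
    · exact le_trans hu1.2 (le_trans (le_abs_self b) (le_max_right _ _))
  have hbd1 : |(anisoForce fA fR χ u).1| ≤ K * Real.exp (-(c/2) * |u.2|) := by
    have : |(anisoForce fA fR χ u).1| = |fA r + fR r| * |u.1| := by
      rw [anisoForce, ← hr]; exact abs_mul _ _
    rw [this]
    have h1 : |fA r + fR r| ≤ C * Real.exp (-c * r) := le_trans (abs_add_le _ _) hd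
    calc |fA r + fR r| * |u.1| ≤ (C * Real.exp (-c * r)) * max |a| |b| := by
          apply mul_le_mul h1 hu1' (abs_nonneg _)
          positivity
      _ ≤ (C * Real.exp (-(c/2) * |u.2|)) * max (max |a| |b|) (2/c) := by
          have hm0 : (0:ℝ) ≤ max |a| |b| :=
            le_trans (abs_nonneg a) (le_max_left _ _)
          apply mul_le_mul _ (le_max_left _ _) hm0 (by positivity)
          exact mul_le_mul_of_nonneg_left hexp (le_of_lt hC)
      _ = K * Real.exp (-(c/2) * |u.2|) := by ring
  have hbd2 : |(anisoForce fA fR χ u).2| ≤ K * Real.exp (-(c/2) * |u.2|) := by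
    have he : |(anisoForce fA fR χ u).2| = |χ * fA r + fR r| * |u.2| := by
      rw [anisoForce, ← hr]; exact abs_mul _ _
    rw [he]
    have h1 : |χ * fA r + fR r| ≤ C * Real.exp (-c * r) := by
      calc |χ * fA r + fR r| ≤ |χ * fA r| + |fR r| := abs_add_le _ _
        _ = χ * |fA r| + |fR r| := by rw [abs_mul, abs_of_nonneg hχ0]
        _ ≤ |fA r| + |fR r| := by nlinarith
        _ ≤ C * Real.exp (-c * r) := hd
    have hkey : |u.2| * Real.exp (-(c/2) * |u.2|) ≤ 2 / c := by
      have h2 : (c/2) * |u.2| ≤ Real.exp ((c/2) * |u.2|) := by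
        have := Real.add_one_le_exp ((c/2) * |u.2|); linarith
      have hepos : 0 < Real.exp (-(c/2) * |u.2|) := Real.exp_pos _
      have hmul : Real.exp ((c/2) * |u.2|) * Real.exp (-(c/2) * |u.2|) = 1 := by
        rw [← Real.exp_add]; ring_nf; exact Real.exp_zero
      have := mul_le_mul_of_nonneg_right h2 (le_of_lt hepos)
      rw [hmul] at this
      have hc2 : 0 < c / 2 := half_pos hc
      calc |u.2| * Real.exp (-(c/2) * |u.2|)
          = ((c/2) * |u.2| * Real.exp (-(c/2) * |u.2|)) / (c/2) := by field_simp
        _ ≤ 1 / (c/2) := by gcongr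
        _ = 2 / c := by field_simp
    set E := Real.exp (-(c/2) * |u.2|) with hE
    have hEpos : 0 < E := Real.exp_pos _
    have s1 : |χ * fA r + fR r| ≤ C * (E * E) :=
      le_trans h1 (mul_le_mul_of_nonneg_left hexp2 hC.le)
    have s2 : |χ * fA r + fR r| * |u.2| ≤ C * (E * E) * |u.2| :=
      mul_le_mul_of_nonneg_right s1 (abs_nonneg _)
    have s4 : C * (|u.2| * E) * E ≤ C * (2/c) * E := by
      have := mul_le_mul_of_nonneg_right
        (mul_le_mul_of_nonneg_left hkey hC.le) hEpos.le
      linarith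
    have s5 : C * (2/c) * E ≤ K * E := by
      apply mul_le_mul_of_nonneg_right _ hEpos.le
      exact mul_le_mul_of_nonneg_left (le_max_right _ _) hC.le
    nlinarith
  rw [Prod.norm_def, Real.norm_eq_abs, Real.norm_eq_abs]
  exact max_le hbd1 hbd2

lemma stripe_translate {fA fR : ℝ → ℝ} {χ : ℝ} (y l r : ℝ) :
    ∫ u in Icc (y - l) (y - r) ×ˢ (univ : Set ℝ),
        anisoForce fA fR χ (((y, 0) : ℝ × ℝ) - u)
      = ∫ u in Icc r l ×ˢ (univ : Set ℝ), anisoForce fA fR χ u := by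
  have hmp : MeasurePreserving (fun u : ℝ × ℝ => ((y, 0) : ℝ × ℝ) - u) volume volume :=
    Measure.measurePreserving_sub_left volume _
  have hemb : MeasurableEmbedding (fun u : ℝ × ℝ => ((y, 0) : ℝ × ℝ) - u) :=
    (MeasurableEquiv.subLeft ((y, 0) : ℝ × ℝ)).measurableEmbedding
  have hpre : (fun u : ℝ × ℝ => ((y, 0) : ℝ × ℝ) - u) ⁻¹' (Icc r l ×ˢ (univ : Set ℝ))
      = Icc (y - l) (y - r) ×ˢ (univ : Set ℝ) := by
    ext ⟨p, q⟩
    simp only [mem_preimage, mem_prod, mem_Icc, mem_univ, and_true, Prod.fst_sub, Prod.snd_sub]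
    constructor <;> intro h <;> exact ⟨by linarith [h.1, h.2], by linarith [h.1, h.2]⟩
  rw [← hpre]
  exact hmp.setIntegral_preimage_emb hemb _ _

lemma stripe_snd_zero {fA fR : ℝ → ℝ} {χ : ℝ} (a b : ℝ) :
    ∫ u in Icc a b ×ˢ (univ : Set ℝ), (anisoForce fA fR χ u).2 = 0 := by
  have hmp : MeasurePreserving (fun u : ℝ × ℝ => (u.1, -u.2)) volume volume := by
    rw [Measure.volume_eq_prod]
    exact (MeasurePreserving.id volume).prod (Measure.measurePreserving_neg volume)
  have hemb : MeasurableEmbedding (fun u : ℝ × ℝ => (u.1, -u.2)) :=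
    ((MeasurableEquiv.refl ℝ).prodCongr (MeasurableEquiv.neg ℝ)).measurableEmbedding
  have hpre : (fun u : ℝ × ℝ => (u.1, -u.2)) ⁻¹' (Icc a b ×ˢ (univ : Set ℝ))
      = Icc a b ×ˢ (univ : Set ℝ) := by
    ext ⟨p, q⟩; simp
  have key := hmp.setIntegral_preimage_emb hemb
    (fun u : ℝ × ℝ => (anisoForce fA fR χ u).2) (Icc a b ×ˢ (univ : Set ℝ))
  rw [hpre] at key
  have : ∫ u in Icc a b ×ˢ (univ : Set ℝ), (anisoForce fA fR χ (u.1, -u.2)).2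
      = ∫ u in Icc a b ×ˢ (univ : Set ℝ), -(anisoForce fA fR χ u).2 := by
    apply setIntegral_congr_fun (measurableSet_Icc.prod MeasurableSet.univ)
    intro u _
    simp only [aniso_flip]
  rw [this, integral_neg] at key
  linarith

lemma stripe_fst_reflect {fA fR : ℝ → ℝ} {χ : ℝ} (a b : ℝ) :
    ∫ u in Icc a b ×ˢ (univ : Set ℝ), (anisoForce fA fR χ u).1
      = -∫ u in Icc (-b) (-a) ×ˢ (univ : Set ℝ), (anisoForce fA fR χ u).1 := by
  have hmp : MeasurePreserving (fun u : ℝ × ℝ => -u) volume volume :=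
    Measure.measurePreserving_neg volume
  have hemb : MeasurableEmbedding (fun u : ℝ × ℝ => -u) :=
    (MeasurableEquiv.neg (ℝ × ℝ)).measurableEmbedding
  have hpre : (fun u : ℝ × ℝ => -u) ⁻¹' (Icc (-b) (-a) ×ˢ (univ : Set ℝ))
      = Icc a b ×ˢ (univ : Set ℝ) := by
    ext ⟨p, q⟩
    simp only [mem_preimage, mem_prod, mem_Icc, mem_univ, and_true, Prod.fst_neg]
    constructor <;> intro h <;> exact ⟨by linarith [h.1, h.2], by linarith [h.1, h.2]⟩
  have key := hmp.setIntegral_preimage_emb hemb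
    (fun u : ℝ × ℝ => (anisoForce fA fR χ u).1) (Icc (-b) (-a) ×ˢ (univ : Set ℝ))
  rw [hpre] at key
  have : ∫ u in Icc a b ×ˢ (univ : Set ℝ), (anisoForce fA fR χ (-u)).1
      = ∫ u in Icc a b ×ˢ (univ : Set ℝ), -(anisoForce fA fR χ u).1 := by
    apply setIntegral_congr_fun (measurableSet_Icc.prod MeasurableSet.univ)
    intro u _
    simp only [aniso_neg, Prod.fst_neg]
  rw [this, integral_neg] at key
  linarith

lemma stripe_fst_sym {fA fR : ℝ → ℝ} {χ : ℝ} (a : ℝ) :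
    ∫ u in Icc (-a) a ×ˢ (univ : Set ℝ), (anisoForce fA fR χ u).1 = 0 := by
  have := stripe_fst_reflect (fA := fA) (fR := fR) (χ := χ) (-a) a
  rw [neg_neg] at this
  linarith

lemma stripe_fst_add {fA fR : ℝ → ℝ} {χ : ℝ} {a b d : ℝ} (hab : a ≤ b) (hbd : b ≤ d)
    (hint : IntegrableOn (fun u : ℝ × ℝ => (anisoForce fA fR χ u).1)
      (Icc a d ×ˢ (univ : Set ℝ)) volume) :
    ∫ u in Icc a d ×ˢ (univ : Set ℝ), (anisoForce fA fR χ u).1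
      = (∫ u in Icc a b ×ˢ (univ : Set ℝ), (anisoForce fA fR χ u).1)
        + ∫ u in Icc b d ×ˢ (univ : Set ℝ), (anisoForce fA fR χ u).1 := by
  have hsub1 : Icc a b ×ˢ (univ : Set ℝ) ⊆ Icc a d ×ˢ (univ : Set ℝ) :=
    prod_mono (Icc_subset_Icc le_rfl hbd) Subset.rfl
  have hsub2 : Ioc b d ×ˢ (univ : Set ℝ) ⊆ Icc a d ×ˢ (univ : Set ℝ) :=
    prod_mono (Ioc_subset_Icc_self.trans (Icc_subset_Icc hab le_rfl)) Subset.rfl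
  have hdisj : Disjoint (Icc a b ×ˢ (univ : Set ℝ)) (Ioc b d ×ˢ (univ : Set ℝ)) := by
    rw [Set.disjoint_left]
    rintro ⟨p, q⟩ ⟨hp, -⟩ ⟨hp', -⟩
    exact absurd hp.2 (not_le.2 hp'.1)
  have hnull : volume (({b} : Set ℝ) ×ˢ (univ : Set ℝ)) = 0 := by
    rw [Measure.volume_eq_prod, Measure.prod_prod]
    simp
  have haeq : (Ioc b d ×ˢ (univ : Set ℝ) : Set (ℝ × ℝ)) =ᵐ[volume]
      (Icc b d ×ˢ (univ : Set ℝ) : Set (ℝ × ℝ)) := by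
    rw [MeasureTheory.ae_eq_set]
    constructor
    · have : (Ioc b d ×ˢ (univ : Set ℝ)) \ (Icc b d ×ˢ (univ : Set ℝ)) = ∅ := by
        rw [diff_eq_empty]
        exact prod_mono Ioc_subset_Icc_self Subset.rfl
      rw [this]; exact measure_empty
    · refine measure_mono_null ?_ hnull
      rintro ⟨p, q⟩ ⟨⟨hp, -⟩, hnp⟩
      constructor
      · simp only [mem_singleton_iff]
        by_contra hne
        exact hnp ⟨⟨lt_of_le_of_ne hp.1 (Ne.symm hne), hp.2⟩, mem_univ q⟩
      · exact mem_univ q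
  calc ∫ u in Icc a d ×ˢ (univ : Set ℝ), (anisoForce fA fR χ u).1
      = ∫ u in (Icc a b ×ˢ (univ : Set ℝ)) ∪ (Ioc b d ×ˢ (univ : Set ℝ)),
          (anisoForce fA fR χ u).1 := by
        rw [← union_prod, Icc_union_Ioc_eq_Icc hab hbd]
    _ = (∫ u in Icc a b ×ˢ (univ : Set ℝ), (anisoForce fA fR χ u).1)
        + ∫ u in Ioc b d ×ˢ (univ : Set ℝ), (anisoForce fA fR χ u).1 :=
        setIntegral_union hdisj (measurableSet_Ioc.prod MeasurableSet.univ)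
          (hint.mono_set hsub1) (hint.mono_set hsub2)
    _ = _ := by rw [setIntegral_congr_set haeq]


/-- For the anisotropic force with exponentially decaying
continuous coefficients and a vertical stripe of width `Δ > 0`: for every
`x₁ ∈ [−Δ/2, Δ/2]` the second component of the stripe force integral at
`(x₁,0)` vanishes, and the full vector equilibrium condition on the stripe
holds if and only if the first component satisfies
`∫_{[x₁,Δ−x₁]×ℝ} F₁(x') dx' = 0` for all `x₁ ∈ [0, Δ/2)`. -/
theorem stripe_equilibrium_reduction
    (χ : ℝ) (hχ : χ ∈ Set.Icc (0:ℝ) 1)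
    (fA fR : ℝ → ℝ)
    (hfA : ContinuousOn fA (Set.Ici 0)) (hfR : ContinuousOn fR (Set.Ici 0))
    (C c : ℝ) (hC : 0 < C) (hc : 0 < c)
    (hdecay : ∀ ρ ∈ Set.Ici (0:ℝ), |fA ρ| + |fR ρ| ≤ C * Real.exp (-c * ρ))
    (Δ : ℝ) (hΔ : 0 < Δ) :
    (∀ x₁ ∈ Set.Icc (-(Δ / 2)) (Δ / 2),
        (∫ x' in Set.Icc (-(Δ / 2)) (Δ / 2) ×ˢ (Set.univ : Set ℝ),
          anisoForce fA fR χ (((x₁, 0) : ℝ × ℝ) - x')).2 = 0)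
      ∧ ((∀ x₁ ∈ Set.Icc (-(Δ / 2)) (Δ / 2),
            ∫ x' in Set.Icc (-(Δ / 2)) (Δ / 2) ×ˢ (Set.univ : Set ℝ),
              anisoForce fA fR χ (((x₁, 0) : ℝ × ℝ) - x') = 0)
          ↔ ∀ x₁ ∈ Set.Ico (0:ℝ) (Δ / 2),
              ∫ x' in Set.Icc x₁ (Δ - x₁) ×ˢ (Set.univ : Set ℝ),
                (anisoForce fA fR χ x').1 = 0) := by
  have hint : ∀ a b : ℝ,
      IntegrableOn (anisoForce fA fR χ) (Icc a b ×ˢ (univ : Set ℝ)) volume :=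
    fun a b => aniso_integrableOn hχ hfA hfR hC hc hdecay a b
  have hfst : ∀ a b : ℝ, IntegrableOn (fun u : ℝ × ℝ => (anisoForce fA fR χ u).1)
      (Icc a b ×ˢ (univ : Set ℝ)) volume := fun a b => (hint a b).fst
  have hI : ∀ y : ℝ,
      (∫ u in Icc (-(Δ / 2)) (Δ / 2) ×ˢ (univ : Set ℝ),
          anisoForce fA fR χ (((y, 0) : ℝ × ℝ) - u))
        = ∫ u in Icc (y - Δ / 2) (y + Δ / 2) ×ˢ (univ : Set ℝ), anisoForce fA fR χ u := by
    intro y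
    have h := stripe_translate (fA := fA) (fR := fR) (χ := χ) y (y + Δ / 2) (y - Δ / 2)
    have e1 : y - (y + Δ / 2) = -(Δ / 2) := by ring
    have e2 : y - (y - Δ / 2) = Δ / 2 := by ring
    rw [e1, e2] at h
    exact h
  have hvec : ∀ a b : ℝ,
      (∫ u in Icc a b ×ˢ (univ : Set ℝ), anisoForce fA fR χ u)
        = ((∫ u in Icc a b ×ˢ (univ : Set ℝ), (anisoForce fA fR χ u).1), (0 : ℝ)) := by
    intro a b
    have hp := integral_pair (μ := volume.restrict (Icc a b ×ˢ (univ : Set ℝ)))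
      (f := fun u : ℝ × ℝ => (anisoForce fA fR χ u).1)
      (g := fun u : ℝ × ℝ => (anisoForce fA fR χ u).2)
      (hint a b).fst (hint a b).snd
    rw [stripe_snd_zero] at hp
    exact hp
  have hPQ : ∀ y : ℝ, 0 ≤ y → y ≤ Δ / 2 →
      (∫ u in Icc (y - Δ / 2) (y + Δ / 2) ×ˢ (univ : Set ℝ), (anisoForce fA fR χ u).1)
        = ∫ u in Icc (Δ / 2 - y) (Δ - (Δ / 2 - y)) ×ˢ (univ : Set ℝ),
            (anisoForce fA fR χ u).1 := by
    intro y h0 h2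
    have e : Δ - (Δ / 2 - y) = y + Δ / 2 := by ring
    rw [e]
    have hsplit := stripe_fst_add (fA := fA) (fR := fR) (χ := χ)
      (a := y - Δ / 2) (b := Δ / 2 - y) (d := y + Δ / 2)
      (by linarith) (by linarith) (hfst _ _)
    have hsym' : (∫ u in Icc (y - Δ / 2) (Δ / 2 - y) ×ˢ (univ : Set ℝ),
        (anisoForce fA fR χ u).1) = 0 := by
      have e2 : y - Δ / 2 = -(Δ / 2 - y) := by ring
      rw [e2]
      exact stripe_fst_sym _
    rw [hsplit, hsym', zero_add]
  have hmain : ∀ y : ℝ,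
      ((∫ x' in Icc (-(Δ / 2)) (Δ / 2) ×ˢ (univ : Set ℝ),
          anisoForce fA fR χ (((y, 0) : ℝ × ℝ) - x')) = 0
        ↔ (∫ u in Icc (y - Δ / 2) (y + Δ / 2) ×ˢ (univ : Set ℝ),
            (anisoForce fA fR χ u).1) = 0) := by
    intro y
    rw [hI y, hvec]
    constructor
    · intro h
      have := congrArg Prod.fst h
      simpa using this
    · intro h
      rw [h]
      rfl
  constructor
  · intro x₁ _
    rw [hI x₁, hvec]
  · constructor
    · intro h x₁ hx₁
      obtain ⟨hx0, hx2⟩ := hx₁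
      have hy : Δ / 2 - x₁ ∈ Icc (-(Δ / 2)) (Δ / 2) := by
        rw [mem_Icc]; constructor <;> linarith
      have h1 := (hmain (Δ / 2 - x₁)).1 (h _ hy)
      have h2 := hPQ (Δ / 2 - x₁) (by linarith) (by linarith)
      have e : Δ / 2 - (Δ / 2 - x₁) = x₁ := by ring
      rw [e] at h2
      rw [h2] at h1
      exact h1
    · intro h y hy
      obtain ⟨hy1, hy2⟩ := hy
      rw [hmain y]
      rcases lt_trichotomy y 0 with hneg | hzero | hpos
      · have hr := stripe_fst_reflect (fA := fA) (fR := fR) (χ := χ) (y - Δ / 2) (y + Δ / 2)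
        have e1 : -(y + Δ / 2) = -y - Δ / 2 := by ring
        have e2 : -(y - Δ / 2) = -y + Δ / 2 := by ring
        rw [e1, e2] at hr
        have hP : (∫ u in Icc (-y - Δ / 2) (-y + Δ / 2) ×ˢ (univ : Set ℝ),
            (anisoForce fA fR χ u).1) = 0 := by
          have h2 := hPQ (-y) (by linarith) (by linarith)
          have e3 : -y - Δ / 2 = (-y) - Δ / 2 := by ring
          have e4 : -y + Δ / 2 = (-y) + Δ / 2 := by ring
          rw [e3, e4, h2]
          apply h
          rw [mem_Ico]; constructor <;> linarith
        rw [hr, hP, neg_zero]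
      · subst hzero
        have e1 : (0 : ℝ) - Δ / 2 = -(Δ / 2) := by ring
        have e2 : (0 : ℝ) + Δ / 2 = Δ / 2 := by ring
        rw [e1, e2]
        exact stripe_fst_sym _
      · rw [hPQ y (le_of_lt hpos) hy2]
        apply h
        rw [mem_Ico]; constructor <;> linarith
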